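/- Let d ≥ 2 be an integer, χ a Dirichlet character modulo d, λ a real number with 0 < λ < 1, and k ≥ 1 an integer. Then the series below converge absolutely and ∑_{m=1}^{∞} χ(m)·λ^m·m^{k−1} + (log λ/k)·∑_{m=1}^{∞} χ(m)·λ^m·m^k = −B_{k,χ}(λ)/k. -/

import Mathlib

/-- The generalized λ-Bernoulli numbers `B_{n,χ}(λ)` attached to a Dirichlet character `χ`
modulo `d`, defined by the recurrence
`λ^d·∑_{k=0}^{n} C(n,k)·d^{n-k}·B_{k,χ}(λ) - B_{n,χ}(λ)
  = (log λ)·∑_{j=0}^{d-1} χ(j)·λ^j·j^n + n·∑_{j=0}^{d-1} χ(j)·λ^j·j^{n-1}`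
(with `0^0 = 1` and `0·j^{-1} = 0`), which encodes the generating function
`∑_{j=0}^{d-1} χ(j)·λ^j·e^{jt}·(log λ + t)/(λ^d e^{dt} - 1) = ∑_{n≥0} B_{n,χ}(λ)·t^n/n!`. -/
noncomputable def genLambdaBernoulli {d : ℕ} (χ : DirichletCharacter ℂ d) (lam : ℝ) : ℕ → ℂ
  | n =>
    (((Real.log lam : ℂ) * ∑ j ∈ Finset.range d, χ (j : ZMod d) * (lam : ℂ) ^ j * (j : ℂ) ^ n +
          (n : ℂ) * ∑ j ∈ Finset.range d, χ (j : ZMod d) * (lam : ℂ) ^ j * (j : ℂ) ^ (n - 1)) -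
        (lam : ℂ) ^ d *
          ∑ k : Fin n, (n.choose (k : ℕ) : ℂ) * (d : ℂ) ^ (n - (k : ℕ)) *
            genLambdaBernoulli χ lam k) /
      ((lam : ℂ) ^ d - 1)

open Finset

/-- `S_n = ∑_{m≥1} χ(m) λ^m m^n`. -/
noncomputable def glS {d : ℕ} (χ : DirichletCharacter ℂ d) (lam : ℝ) (n : ℕ) : ℂ :=
  ∑' m : ℕ, χ ((m + 1 : ℕ) : ZMod d) * (lam : ℂ) ^ (m + 1) * ((m + 1 : ℕ) : ℂ) ^ n

/-- `T_n = ∑_{j=0}^{d-1} χ(j) λ^j j^n`. -/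
noncomputable def glT {d : ℕ} (χ : DirichletCharacter ℂ d) (lam : ℝ) (n : ℕ) : ℂ :=
  ∑ j ∈ Finset.range d, χ (j : ZMod d) * (lam : ℂ) ^ j * (j : ℂ) ^ n

lemma glS_summable_norm {d : ℕ} (χ : DirichletCharacter ℂ d) {lam : ℝ} (h0 : 0 < lam)
    (h1 : lam < 1) (n : ℕ) :
    Summable (fun m : ℕ => ‖χ ((m + 1 : ℕ) : ZMod d) * (lam : ℂ) ^ (m + 1) * ((m + 1 : ℕ) : ℂ) ^ n‖) := by
  have hb0 : Summable (fun m : ℕ => (m : ℝ) ^ n * lam ^ m) :=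
    summable_pow_mul_geometric_of_norm_lt_one n
      (by rwa [Real.norm_eq_abs, abs_of_pos h0])
  have hb : Summable (fun m : ℕ => ((m + 1 : ℕ) : ℝ) ^ n * lam ^ (m + 1)) := by
    have := (summable_nat_add_iff (f := fun m : ℕ => (m : ℝ) ^ n * lam ^ m) 1).mpr hb0
    exact this.congr (fun m => by push_cast; ring)
  refine Summable.of_nonneg_of_le (fun m => norm_nonneg _) (fun m => ?_) hb
  rw [norm_mul, norm_mul]
  have h1' : ‖χ ((m + 1 : ℕ) : ZMod d)‖ ≤ 1 := χ.norm_le_one _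
  have h2' : ‖(lam : ℂ) ^ (m + 1)‖ = lam ^ (m + 1) := by
    rw [norm_pow, Complex.norm_real, Real.norm_eq_abs, abs_of_pos h0]
  have h3' : ‖((m + 1 : ℕ) : ℂ) ^ n‖ = ((m + 1 : ℕ) : ℝ) ^ n := by
    rw [norm_pow, Complex.norm_natCast]
  rw [h2', h3']
  calc ‖χ ((m + 1 : ℕ) : ZMod d)‖ * lam ^ (m + 1) * ((m + 1 : ℕ) : ℝ) ^ n
      ≤ 1 * lam ^ (m + 1) * ((m + 1 : ℕ) : ℝ) ^ n := by
        have : (0:ℝ) ≤ lam ^ (m+1) := le_of_lt (pow_pos h0 _)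
        have : (0:ℝ) ≤ ((m + 1 : ℕ) : ℝ) ^ n := by positivity
        gcongr
    _ = ((m + 1 : ℕ) : ℝ) ^ n * lam ^ (m + 1) := by ring

lemma glS_summable {d : ℕ} (χ : DirichletCharacter ℂ d) {lam : ℝ} (h0 : 0 < lam)
    (h1 : lam < 1) (n : ℕ) :
    Summable (fun m : ℕ => χ ((m + 1 : ℕ) : ZMod d) * (lam : ℂ) ^ (m + 1) * ((m + 1 : ℕ) : ℂ) ^ n) :=
  (glS_summable_norm χ h0 h1 n).of_norm

lemma glChi_zero {d : ℕ} (hd : 2 ≤ d) (χ : DirichletCharacter ℂ d) : χ (0 : ZMod d) = 0 := by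
  haveI : Fact (1 < d) := ⟨by omega⟩
  refine χ.map_nonunit ?_
  intro h
  exact zero_ne_one (isUnit_zero_iff.mp h)

lemma glT_eq {d : ℕ} (hd : 2 ≤ d) (χ : DirichletCharacter ℂ d) (lam : ℝ) (n : ℕ) :
    ∑ i ∈ range d, χ ((i + 1 : ℕ) : ZMod d) * (lam : ℂ) ^ (i + 1) * ((i + 1 : ℕ) : ℂ) ^ n
      = glT χ lam n := by
  have h := Finset.sum_range_succ'
    (fun j : ℕ => χ ((j : ℕ) : ZMod d) * (lam : ℂ) ^ j * ((j : ℕ) : ℂ) ^ n) d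
  rw [Finset.sum_range_succ] at h
  have hg0 : χ ((0 : ℕ) : ZMod d) * (lam : ℂ) ^ 0 * ((0 : ℕ) : ℂ) ^ n = 0 := by
    simp [glChi_zero hd χ]
  have hgd : χ ((d : ℕ) : ZMod d) * (lam : ℂ) ^ d * ((d : ℕ) : ℂ) ^ n = 0 := by
    simp [ZMod.natCast_self, glChi_zero hd χ]
  rw [hg0, hgd] at h
  simp only [add_zero] at h
  rw [glT, h]

lemma glS_rec {d : ℕ} (hd : 2 ≤ d) (χ : DirichletCharacter ℂ d) {lam : ℝ} (h0 : 0 < lam)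
    (h1 : lam < 1) (n : ℕ) :
    (lam : ℂ) ^ d * ∑ k ∈ range (n + 1), (n.choose k : ℂ) * (d : ℂ) ^ (n - k) * glS χ lam k
      = glS χ lam n - glT χ lam n := by
  set f : ℕ → ℂ := fun m =>
    χ ((m + 1 : ℕ) : ZMod d) * (lam : ℂ) ^ (m + 1) * ((m + 1 : ℕ) : ℂ) ^ n with hf
  have hfs : Summable f := glS_summable χ h0 h1 n
  have step1 : ∑ k ∈ range (n + 1), (n.choose k : ℂ) * (d : ℂ) ^ (n - k) * glS χ lam k
      = ∑' m : ℕ, χ ((m + 1 : ℕ) : ZMod d) * (lam : ℂ) ^ (m + 1) *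
          (((m + 1 : ℕ) : ℂ) + (d : ℂ)) ^ n := by
    have h1' : ∀ k ∈ range (n + 1), (n.choose k : ℂ) * (d : ℂ) ^ (n - k) * glS χ lam k
        = ∑' m : ℕ, (n.choose k : ℂ) * (d : ℂ) ^ (n - k) *
            (χ ((m + 1 : ℕ) : ZMod d) * (lam : ℂ) ^ (m + 1) * ((m + 1 : ℕ) : ℂ) ^ k) := by
      intro k _
      rw [glS, tsum_mul_left]
    rw [Finset.sum_congr rfl h1', ← Summable.tsum_finsetSum
      (fun k _ => (glS_summable χ h0 h1 k).mul_left _)]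
    refine tsum_congr fun m => ?_
    rw [add_pow, Finset.mul_sum]
    refine Finset.sum_congr rfl fun k _ => ?_
    ring
  rw [step1, ← tsum_mul_left]
  have step2 : ∀ m : ℕ, (lam : ℂ) ^ d *
      (χ ((m + 1 : ℕ) : ZMod d) * (lam : ℂ) ^ (m + 1) * (((m + 1 : ℕ) : ℂ) + (d : ℂ)) ^ n)
      = f (m + d) := by
    intro m
    have hχ : ((m + d + 1 : ℕ) : ZMod d) = ((m + 1 : ℕ) : ZMod d) := by
      push_cast [ZMod.natCast_self]; ring
    simp only [hf, hχ]
    push_cast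
    ring
  rw [tsum_congr step2]
  have h3 := Summable.sum_add_tsum_nat_add (f := f) d hfs
  have h4 : ∑ i ∈ range d, f i = glT χ lam n := glT_eq hd χ lam n
  have : glS χ lam n = ∑' m : ℕ, f m := rfl
  rw [this, ← h3, h4]
  ring

lemma glS_rec2 {d : ℕ} (hd : 2 ≤ d) (χ : DirichletCharacter ℂ d) {lam : ℝ} (h0 : 0 < lam)
    (h1 : lam < 1) (n : ℕ) :
    (lam : ℂ) ^ d * ∑ k ∈ range (n + 1),
        (n.choose k : ℂ) * (d : ℂ) ^ (n - k) * ((k : ℂ) * glS χ lam (k - 1))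
      = (n : ℂ) * (glS χ lam (n - 1) - glT χ lam (n - 1)) := by
  cases n with
  | zero => simp
  | succ m =>
    rw [Finset.sum_range_succ']
    have hz : ((m + 1).choose 0 : ℂ) * (d : ℂ) ^ (m + 1 - 0) * (((0 : ℕ) : ℂ) * glS χ lam (0 - 1)) = 0 := by
      simp
    rw [hz, add_zero]
    have hcongr : ∀ i ∈ range (m + 1),
        ((m + 1).choose (i + 1) : ℂ) * (d : ℂ) ^ (m + 1 - (i + 1)) * (((i + 1 : ℕ) : ℂ) * glS χ lam (i + 1 - 1))
        = ((m + 1 : ℕ) : ℂ) * ((m.choose i : ℂ) * (d : ℂ) ^ (m - i) * glS χ lam i) := by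
      intro i _
      have hch : ((m + 1 : ℕ) : ℂ) * (m.choose i : ℂ) = ((m + 1).choose (i + 1) : ℂ) * ((i + 1 : ℕ) : ℂ) := by
        have h := congrArg (Nat.cast : ℕ → ℂ) (Nat.add_one_mul_choose_eq m i)
        push_cast at h ⊢
        linear_combination h
      have hsub : m + 1 - (i + 1) = m - i := by omega
      rw [hsub]
      have : (i + 1 - 1) = i := by omega
      rw [this]
      calc ((m + 1).choose (i + 1) : ℂ) * (d : ℂ) ^ (m - i) * (((i + 1 : ℕ) : ℂ) * glS χ lam i)
          = (((m + 1).choose (i + 1) : ℂ) * ((i + 1 : ℕ) : ℂ)) * (d : ℂ) ^ (m - i) * glS χ lam i := by ring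
        _ = (((m + 1 : ℕ) : ℂ) * (m.choose i : ℂ)) * (d : ℂ) ^ (m - i) * glS χ lam i := by rw [hch]
        _ = ((m + 1 : ℕ) : ℂ) * ((m.choose i : ℂ) * (d : ℂ) ^ (m - i) * glS χ lam i) := by ring
    rw [Finset.sum_congr rfl hcongr, ← Finset.mul_sum]
    have key := glS_rec hd χ h0 h1 m
    have hs : m + 1 - 1 = m := rfl
    rw [hs]
    push_cast
    linear_combination ((m : ℂ) + 1) * key

lemma glKey {d : ℕ} (hd : 2 ≤ d) (χ : DirichletCharacter ℂ d) {lam : ℝ} (h0 : 0 < lam)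
    (h1 : lam < 1) (n : ℕ) :
    (lam : ℂ) ^ d * ∑ k ∈ range (n + 1), (n.choose k : ℂ) * (d : ℂ) ^ (n - k) *
        (-((Real.log lam : ℂ) * glS χ lam k + (k : ℂ) * glS χ lam (k - 1)))
      - (-((Real.log lam : ℂ) * glS χ lam n + (n : ℂ) * glS χ lam (n - 1)))
      = (Real.log lam : ℂ) * glT χ lam n + (n : ℂ) * glT χ lam (n - 1) := by
  have ha := glS_rec hd χ h0 h1 n
  have hb := glS_rec2 hd χ h0 h1 n
  have hsplit : ∑ k ∈ range (n + 1), (n.choose k : ℂ) * (d : ℂ) ^ (n - k) *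
      (-((Real.log lam : ℂ) * glS χ lam k + (k : ℂ) * glS χ lam (k - 1)))
    = -((Real.log lam : ℂ) * ∑ k ∈ range (n + 1), (n.choose k : ℂ) * (d : ℂ) ^ (n - k) * glS χ lam k
        + ∑ k ∈ range (n + 1), (n.choose k : ℂ) * (d : ℂ) ^ (n - k) * ((k : ℂ) * glS χ lam (k - 1))) := by
    rw [Finset.mul_sum, ← Finset.sum_add_distrib, ← Finset.sum_neg_distrib]
    exact Finset.sum_congr rfl fun k _ => by ring
  rw [hsplit]
  linear_combination (-(Real.log lam : ℂ)) * ha - hb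

lemma genLambdaBernoulli_eq_glS {d : ℕ} (hd : 2 ≤ d) (χ : DirichletCharacter ℂ d) {lam : ℝ}
    (h0 : 0 < lam) (h1 : lam < 1) (n : ℕ) :
    genLambdaBernoulli χ lam n
      = -((Real.log lam : ℂ) * glS χ lam n + (n : ℂ) * glS χ lam (n - 1)) := by
  induction n using Nat.strong_induction_on with
  | _ n ih =>
    rw [genLambdaBernoulli]
    have hne : (lam : ℂ) ^ d - 1 ≠ 0 := by
      have hlt : lam ^ d < 1 := pow_lt_one₀ h0.le h1 (by omega)
      intro h
      rw [sub_eq_zero] at h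
      have h2 : ((lam ^ d : ℝ) : ℂ) = ((1 : ℝ) : ℂ) := by push_cast; exact h
      have := Complex.ofReal_injective h2
      linarith
    rw [div_eq_iff hne]
    have hfin : ∑ k : Fin n, (n.choose (k : ℕ) : ℂ) * (d : ℂ) ^ (n - (k : ℕ)) *
          genLambdaBernoulli χ lam k
        = ∑ k ∈ range n, (n.choose k : ℂ) * (d : ℂ) ^ (n - k) *
            (-((Real.log lam : ℂ) * glS χ lam k + (k : ℂ) * glS χ lam (k - 1))) := by
      rw [Fin.sum_univ_eq_sum_range (fun k => (n.choose k : ℂ) * (d : ℂ) ^ (n - k) * genLambdaBernoulli χ lam k) n]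
      exact Finset.sum_congr rfl fun k hk => by rw [ih k (mem_range.mp hk)]
    rw [hfin]
    have hT1 : ∑ j ∈ Finset.range d, χ (j : ZMod d) * (lam : ℂ) ^ j * (j : ℂ) ^ n
        = glT χ lam n := rfl
    have hT2 : ∑ j ∈ Finset.range d, χ (j : ZMod d) * (lam : ℂ) ^ j * (j : ℂ) ^ (n - 1)
        = glT χ lam (n - 1) := rfl
    rw [hT1, hT2]
    have key := glKey hd χ h0 h1 n
    have hext : ∑ k ∈ range (n + 1), (n.choose k : ℂ) * (d : ℂ) ^ (n - k) *
          (-((Real.log lam : ℂ) * glS χ lam k + (k : ℂ) * glS χ lam (k - 1)))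
        = (∑ k ∈ range n, (n.choose k : ℂ) * (d : ℂ) ^ (n - k) *
            (-((Real.log lam : ℂ) * glS χ lam k + (k : ℂ) * glS χ lam (k - 1))))
          + (-((Real.log lam : ℂ) * glS χ lam n + (n : ℂ) * glS χ lam (n - 1))) := by
      rw [Finset.sum_range_succ, Nat.choose_self, Nat.sub_self]
      push_cast
      ring
    linear_combination -key + (lam : ℂ) ^ d * hext

/-- for an integer `d ≥ 2`, a Dirichlet character `χ` mod `d`, real `0 < λ < 1`
and an integer `k ≥ 1`, the series `∑_{m≥1} χ(m)·λ^m·m^{k-1}` and `∑_{m≥1} χ(m)·λ^m·m^k`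
converge absolutely and
`∑_{m≥1} χ(m)·λ^m·m^{k-1} + (log λ/k)·∑_{m≥1} χ(m)·λ^m·m^k = -B_{k,χ}(λ)/k`. -/
theorem genLambdaBernoulli_eq_tsum (d : ℕ) (hd : 2 ≤ d) (χ : DirichletCharacter ℂ d)
    (lam : ℝ) (h0 : 0 < lam) (h1 : lam < 1) (k : ℕ) (hk : 1 ≤ k) :
    Summable (fun m : ℕ => ‖χ ((m + 1 : ℕ) : ZMod d) * (lam : ℂ) ^ (m + 1) * ((m + 1 : ℕ) : ℂ) ^ (k - 1)‖) ∧
    Summable (fun m : ℕ => ‖χ ((m + 1 : ℕ) : ZMod d) * (lam : ℂ) ^ (m + 1) * ((m + 1 : ℕ) : ℂ) ^ k‖) ∧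
    (∑' m : ℕ, χ ((m + 1 : ℕ) : ZMod d) * (lam : ℂ) ^ (m + 1) * ((m + 1 : ℕ) : ℂ) ^ (k - 1)) +
        ((Real.log lam : ℂ) / (k : ℂ)) *
          ∑' m : ℕ, χ ((m + 1 : ℕ) : ZMod d) * (lam : ℂ) ^ (m + 1) * ((m + 1 : ℕ) : ℂ) ^ k =
      -genLambdaBernoulli χ lam k / (k : ℂ) := by
  refine ⟨glS_summable_norm χ h0 h1 (k - 1), glS_summable_norm χ h0 h1 k, ?_⟩
  have hB := genLambdaBernoulli_eq_glS hd χ h0 h1 k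
  have e1 : (∑' m : ℕ, χ ((m + 1 : ℕ) : ZMod d) * (lam : ℂ) ^ (m + 1) * ((m + 1 : ℕ) : ℂ) ^ (k - 1))
      = glS χ lam (k - 1) := rfl
  have e2 : (∑' m : ℕ, χ ((m + 1 : ℕ) : ZMod d) * (lam : ℂ) ^ (m + 1) * ((m + 1 : ℕ) : ℂ) ^ k)
      = glS χ lam k := rfl
  rw [e1, e2, hB]
  have hk0 : (k : ℂ) ≠ 0 := Nat.cast_ne_zero.mpr (by omega)
  field_simp
  ring
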